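/- Let G = (V,E) be a finite graph with a positive weight function w on its edges, let M be a matching of G, let e ∈ E with e ∉ M, and let α ≥ 1. Then there exists a positive weight function w' on E that coincides with w on E ∖ {e}, and a matching M'' of G, such that w'(M'') > α·w'(M). (This is the adversary argument behind the paper's Lemma 1: any α-approximate matching discovery algorithm must include in its output matching every edge of the input whose weight it never inspects.) -/
import Mathlib


/-- A matching of a graph with edge set `E` (edges as unordered pairs of vertices):
a subset of `E` in which no two distinct edges share an endpoint. -/
def IsGraphMatching {V : Type*} (E M : Finset (Sym2 V)) : Prop :=
  M ⊆ E ∧ ∀ e₁ ∈ M, ∀ e₂ ∈ M, e₁ ≠ e₂ → ∀ v : V, ¬(v ∈ e₁ ∧ v ∈ e₂)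

/-- Adversary argument behind Lemma 1: if `M` is a matching and `e ∈ E` is an edge not in `M`,
then for any `α ≥ 1` one can change the weight of `e` alone (keeping all weights positive)
so that some matching `M''` has weight more than `α` times the weight of `M`. -/
theorem stmt0 {V : Type*} [Fintype V] [DecidableEq V]
    (E : Finset (Sym2 V)) (w : Sym2 V → ℝ) (hw : ∀ f ∈ E, 0 < w f)
    (M : Finset (Sym2 V)) (hM : IsGraphMatching E M)
    (e : Sym2 V) (heE : e ∈ E) (heM : e ∉ M) (α : ℝ) (hα : 1 ≤ α) :
    ∃ w' : Sym2 V → ℝ, (∀ f ∈ E, 0 < w' f) ∧ (∀ f ∈ E, f ≠ e → w' f = w f) ∧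
      ∃ M'' : Finset (Sym2 V), IsGraphMatching E M'' ∧
        α * (∑ f ∈ M, w' f) < ∑ f ∈ M'', w' f := by
  set K : ℝ := α * (∑ f ∈ M, w f) + 1 with hK
  have hsum_nonneg : 0 ≤ ∑ f ∈ M, w f :=
    Finset.sum_nonneg fun f hf => (hw f (hM.1 hf)).le
  have hKpos : 0 < K := by
    have : 0 ≤ α * (∑ f ∈ M, w f) := mul_nonneg (by linarith) hsum_nonneg
    linarith
  refine ⟨fun f => if f = e then K else w f, ?_, ?_, {e}, ?_, ?_⟩
  · intro f hf
    by_cases h : f = e <;> simp [h, hKpos, hw f hf]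
  · intro f _ hfe; simp [hfe]
  · exact ⟨Finset.singleton_subset_iff.mpr heE,
      fun e₁ h₁ e₂ h₂ hne v => by
        simp only [Finset.mem_singleton] at h₁ h₂; exact absurd (h₁.trans h₂.symm) hne⟩
  · have h1 : (∑ f ∈ M, if f = e then K else w f) = ∑ f ∈ M, w f := by
      apply Finset.sum_congr rfl
      intro f hf
      have : f ≠ e := fun h => heM (h ▸ hf)
      simp [this]
    simp only [h1, Finset.sum_singleton]; rw [if_pos trivial, hK]
    linarith
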